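/- Let Γ₁, Γ₂ be groups, a₁ ∈ M_{l₁}(ℤ[Γ₁]), a₂ ∈ M_{l₂}(ℤ[Γ₂]), and form the block sum a = a₁ ⊕ a₂ ∈ M_{l₁+l₂}(ℤ[Γ₁ × Γ₂]) via the natural embeddings ℤ[Γᵢ] → ℤ[Γ₁×Γ₂]. Then the von Neumann dimension over Γ₁ × Γ₂ of the kernel of a acting on ℓ²(Γ₁×Γ₂)^{l₁+l₂} equals dim_{Γ₁}(ker a₁) + dim_{Γ₂}(ker a₂). -/

import Mathlib

noncomputable section
open scoped InnerProductSpace ENNReal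
open Function

/-- `ℓ²(G)^l`, realized as `ℓ²` of `Fin l × G`. -/
abbrev GroupL2 (G : Type*) (l : ℕ) := lp (fun _ : Fin l × G => ℂ) 2

namespace Stmt6Aux

/-- Uniqueness of the image of the orthogonal projection onto the kernel of `T`. -/
theorem proj_eq {E : Type*} [NormedAddCommGroup E] [InnerProductSpace ℂ E] [CompleteSpace E]
    (P T : E →L[ℂ] E) (hP : IsIdempotentElem P) (hsa : IsSelfAdjoint P)
    (hr : LinearMap.range (P : E →ₗ[ℂ] E) = LinearMap.ker (T : E →ₗ[ℂ] E)) (u k : E)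
    (hk : T k = 0) (ho : ∀ w, T w = 0 → ⟪u - k, w⟫_ℂ = 0) : P u = k := by
  have hPP : ∀ x, P (P x) = P x := fun x => by
    conv_rhs => rw [← hP]
    rfl
  have hker : ∀ x, T (P x) = 0 := by
    intro x
    have hx : P x ∈ LinearMap.range (P : E →ₗ[ℂ] E) := ⟨x, rfl⟩
    rw [hr] at hx
    simpa using hx
  have ho' : ∀ w, T w = 0 → ⟪u - P u, w⟫_ℂ = 0 := by
    intro w hw
    have hwP : P w = w := by
      have hx : w ∈ LinearMap.ker (T : E →ₗ[ℂ] E) := by simpa using hw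
      rw [← hr] at hx
      obtain ⟨y, hy⟩ := hx
      have hy' : P y = w := hy
      rw [← hy', hPP]
    rw [← hwP, ← ContinuousLinearMap.adjoint_inner_left, hsa.adjoint_eq, map_sub, hPP,
      sub_self, inner_zero_left]
  have hd : T (P u - k) = 0 := by rw [map_sub, hker u, hk, sub_zero]
  have key : ⟪(u - k) - (u - P u), P u - k⟫_ℂ = 0 := by
    rw [inner_sub_left, ho _ hd, ho' _ hd, sub_zero]
  have heq : (u - k) - (u - P u) = P u - k := by abel
  rw [heq] at key
  exact sub_eq_zero.mp (inner_self_eq_zero.mp key)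

variable {G H : Type*} [Group G] [Group H] {l L : ℕ}

/-- The embedding of index sets. -/
def e (ej : Fin l → Fin L) (φ : G →* H) : Fin l × G → Fin L × H :=
  fun p => (ej p.1, φ p.2)

lemma e_inj {ej : Fin l → Fin L} (hej : Injective ej) {φ : G →* H} (hφ : Injective ⇑φ) :
    Injective (e ej φ) := fun p q h =>
  Prod.ext (hej (congrArg Prod.fst h)) (hφ (congrArg Prod.snd h))

lemma iota_memℓp (ej : Fin l → Fin L) (hej : Injective ej) (φ : G →* H) (hφ : Injective ⇑φ)
    (v : Fin l × G → ℂ) (hv : Memℓp v 2) : Memℓp (extend (e ej φ) v 0) 2 := by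
  apply memℓp_gen
  have hfun : (fun x => ‖extend (e ej φ) v 0 x‖ ^ (2 : ℝ≥0∞).toReal)
      = extend (e ej φ) (fun p => ‖v p‖ ^ (2 : ℝ≥0∞).toReal) 0 := by
    funext x
    rcases em (∃ p, e ej φ p = x) with ⟨p, rfl⟩ | hx
    · rw [(e_inj hej hφ).extend_apply, (e_inj hej hφ).extend_apply]
    · rw [extend_apply' _ _ _ hx, extend_apply' _ _ _ hx]
      norm_num
  rw [hfun, summable_extend_zero (e_inj hej hφ)]
  exact hv.summable (by norm_num)

/-- Extension by zero of an `ℓ²` function along the embedding. -/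
def iota (ej : Fin l → Fin L) (hej : Injective ej) (φ : G →* H) (hφ : Injective ⇑φ)
    (v : GroupL2 G l) : GroupL2 H L :=
  ⟨extend (e ej φ) (⇑v) 0, iota_memℓp ej hej φ hφ _ (lp.memℓp v)⟩

lemma iota_apply (ej : Fin l → Fin L) (hej : Injective ej) (φ : G →* H) (hφ : Injective ⇑φ)
    (v : GroupL2 G l) (p : Fin l × G) :
    iota ej hej φ hφ v (e ej φ p) = v p :=
  (e_inj hej hφ).extend_apply (⇑v) 0 p

lemma iota_apply' (ej : Fin l → Fin L) (hej : Injective ej) (φ : G →* H) (hφ : Injective ⇑φ)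
    (v : GroupL2 G l) {x : Fin L × H} (hx : ¬∃ p, e ej φ p = x) :
    iota ej hej φ hφ v x = 0 :=
  (extend_apply' (⇑v) (0 : Fin L × H → ℂ) x hx).trans rfl

/-- Restriction of an `ℓ²` function along the embedding. -/
def rho (ej : Fin l → Fin L) (hej : Injective ej) (φ : G →* H) (hφ : Injective ⇑φ)
    (w : GroupL2 H L) : GroupL2 G l :=
  ⟨fun p => w (e ej φ p), by
    apply memℓp_gen
    exact ((lp.memℓp w).summable (by norm_num)).comp_injective (e_inj hej hφ)⟩

lemma rho_apply (ej : Fin l → Fin L) (hej : Injective ej) (φ : G →* H) (hφ : Injective ⇑φ)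
    (w : GroupL2 H L) (p : Fin l × G) :
    rho ej hej φ hφ w p = w (e ej φ p) := rfl

lemma inner_iota_left (ej : Fin l → Fin L) (hej : Injective ej) (φ : G →* H) (hφ : Injective ⇑φ)
    (v : GroupL2 G l) (w : GroupL2 H L) :
    ⟪iota ej hej φ hφ v, w⟫_ℂ = ⟪v, rho ej hej φ hφ w⟫_ℂ := by
  rw [lp.inner_eq_tsum, lp.inner_eq_tsum]
  simp only [rho_apply]
  rw [← tsum_extend_zero (e_inj hej hφ) (fun p => ⟪v p, w (e ej φ p)⟫_ℂ)]
  congr 1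
  funext x
  rcases em (∃ p, e ej φ p = x) with ⟨p, rfl⟩ | hx
  · rw [(e_inj hej hφ).extend_apply, iota_apply]
  · rw [extend_apply' _ _ _ hx, iota_apply' ej hej φ hφ v hx]
    simp

lemma sum_support_mapDomain [DecidableEq H] {f : G → H} (hf : Injective f) (μ : G →₀ ℤ) (F : H → ℂ) :
    ∑ x ∈ (Finsupp.mapDomain f μ).support, ((Finsupp.mapDomain f μ x : ℤ) : ℂ) * F x
      = ∑ x ∈ μ.support, ((μ x : ℤ) : ℂ) * F (f x) := by
  rw [Finset.sum_subset Finsupp.mapDomain_support (fun x _ hx => by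
        rw [Finsupp.notMem_support_iff.mp hx]; simp)]
  rw [Finset.sum_image (fun x _ y _ h => hf h)]
  exact Finset.sum_congr rfl fun x _ => by rw [Finsupp.mapDomain_apply hf]

/-- The key induction lemma: the diagonal coefficient of the kernel projection is preserved
under the embedding. -/
theorem key [DecidableEq G] [DecidableEq H]
    (ej : Fin l → Fin L) (hej : Injective ej) (φ : G →* H) (hφ : Injective ⇑φ)
    (a' : Matrix (Fin l) (Fin l) (MonoidAlgebra ℤ G))
    (a : Matrix (Fin L) (Fin L) (MonoidAlgebra ℤ H))
    (H1 : ∀ i j, a (ej i) (ej j) = MonoidAlgebra.mapDomain ⇑φ (a' i j))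
    (H2 : ∀ (i : Fin l) (k : Fin L), (∀ j, ej j ≠ k) → a (ej i) k = 0)
    (H3 : ∀ (i : Fin l) (k : Fin L), (∀ j, ej j ≠ k) → a k (ej i) = 0)
    (T' : GroupL2 G l →L[ℂ] GroupL2 G l)
    (hT' : ∀ (f : GroupL2 G l) (i : Fin l) (g : G),
      T' f (i, g) = ∑ j : Fin l, ∑ x ∈ (a' i j).coeff.support,
        (((a' i j).coeff x : ℤ) : ℂ) * f (j, g * x⁻¹))
    (T : GroupL2 H L →L[ℂ] GroupL2 H L)
    (hT : ∀ (f : GroupL2 H L) (i : Fin L) (g : H),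
      T f (i, g) = ∑ j : Fin L, ∑ x ∈ (a i j).coeff.support,
        (((a i j).coeff x : ℤ) : ℂ) * f (j, g * x⁻¹))
    (P' : GroupL2 G l →L[ℂ] GroupL2 G l)
    (hP' : IsIdempotentElem P') (hsa' : IsSelfAdjoint P')
    (hr' : LinearMap.range (P' : GroupL2 G l →ₗ[ℂ] GroupL2 G l) = LinearMap.ker (T' : GroupL2 G l →ₗ[ℂ] GroupL2 G l))
    (P : GroupL2 H L →L[ℂ] GroupL2 H L)
    (hP : IsIdempotentElem P) (hsa : IsSelfAdjoint P)
    (hr : LinearMap.range (P : GroupL2 H L →ₗ[ℂ] GroupL2 H L) = LinearMap.ker (T : GroupL2 H L →ₗ[ℂ] GroupL2 H L))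
    (i : Fin l) :
    ⟪P (lp.single 2 (ej i, (1 : H)) 1), lp.single 2 (ej i, (1 : H)) 1⟫_ℂ =
    ⟪P' (lp.single 2 (i, (1 : G)) 1), lp.single 2 (i, (1 : G)) 1⟫_ℂ := by
  -- the row formula for `T` along embedded rows
  have T_row : ∀ (w : GroupL2 H L) (i' : Fin l) (h : H),
      T w (ej i', h) = ∑ j : Fin l, ∑ x ∈ (a' i' j).coeff.support,
        (((a' i' j).coeff x : ℤ) : ℂ) * w (ej j, h * (φ x)⁻¹) := by
    intro w i' h
    rw [hT]
    have hz : ∀ k ∈ (Finset.univ : Finset (Fin L)), k ∉ Finset.univ.image ej →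
        (∑ x ∈ (a (ej i') k).coeff.support, (((a (ej i') k).coeff x : ℤ) : ℂ) * w (k, h * x⁻¹)) = 0 := by
      intro k _ hk
      rw [H2 i' k (fun j hj => hk (Finset.mem_image.mpr ⟨j, Finset.mem_univ _, hj⟩))]
      simp
    rw [← Finset.sum_subset (Finset.subset_univ _) hz,
      Finset.sum_image (fun x _ y _ hxy => hej hxy)]
    refine Finset.sum_congr rfl fun j _ => ?_
    rw [H1]
    exact sum_support_mapDomain hφ (a' i' j).coeff (fun y => w (ej j, h * y⁻¹))
  -- restriction maps ker T into ker T'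
  have rho_ker : ∀ w, T w = 0 → T' (rho ej hej φ hφ w) = 0 := by
    intro w hw
    refine lp.ext (funext fun p => ?_)
    obtain ⟨i', g⟩ := p
    have hrw : ∀ (j : Fin l) (x : G),
        (rho ej hej φ hφ w) (j, g * x⁻¹) = w (ej j, φ g * (φ x)⁻¹) := by
      intro j x
      rw [rho_apply]
      simp [e, map_mul, map_inv]
    show T' (rho ej hej φ hφ w) (i', g) = 0
    rw [hT']
    simp_rw [hrw]
    rw [← T_row w i' (φ g), hw]
    rfl
  -- extension maps ker T' into ker T
  have iota_ker : ∀ v, T' v = 0 → T (iota ej hej φ hφ v) = 0 := by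
    intro v hv
    refine lp.ext (funext fun q => ?_)
    obtain ⟨k, h⟩ := q
    show T (iota ej hej φ hφ v) (k, h) = 0
    by_cases hk : ∃ i', ej i' = k
    · obtain ⟨i', rfl⟩ := hk
      rw [T_row]
      by_cases hh : ∃ g, φ g = h
      · obtain ⟨g, rfl⟩ := hh
        have hterm : ∀ (j : Fin l) (x : G),
            (iota ej hej φ hφ v) (ej j, φ g * (φ x)⁻¹) = v (j, g * x⁻¹) := by
          intro j x
          have hx : (ej j, φ g * (φ x)⁻¹) = e ej φ (j, g * x⁻¹) := by
            simp [e, map_mul, map_inv]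
          rw [hx, iota_apply]
        simp_rw [hterm]
        rw [← hT' v i' g, hv]
        rfl
      · have hterm : ∀ (j : Fin l) (x : G),
            (iota ej hej φ hφ v) (ej j, h * (φ x)⁻¹) = 0 := by
          intro j x
          apply iota_apply'
          rintro ⟨⟨j', g'⟩, hp⟩
          refine hh ⟨g' * x, ?_⟩
          have h2 : φ g' = h * (φ x)⁻¹ := congrArg Prod.snd hp
          rw [map_mul, h2]
          group
        simp_rw [hterm]
        simp
    · rw [hT]
      apply Finset.sum_eq_zero
      intro j _
      by_cases hj : ∃ j', ej j' = j
      · obtain ⟨j', rfl⟩ := hj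
        rw [H3 j' k (fun j0 hj0 => hk ⟨j0, hj0⟩)]
        simp
      · apply Finset.sum_eq_zero
        intro x _
        have hz : (iota ej hej φ hφ v) (j, h * x⁻¹) = 0 := by
          apply iota_apply'
          rintro ⟨⟨j', g'⟩, hp⟩
          exact hj ⟨j', congrArg Prod.fst hp⟩
        rw [hz, mul_zero]
  set δ : GroupL2 G l := lp.single 2 (i, (1 : G)) 1 with hδ
  have he1 : e ej φ (i, (1 : G)) = (ej i, (1 : H)) := by simp [e]
  -- the embedded standard basis vector
  have hsingle : (lp.single 2 (ej i, (1 : H)) 1 : GroupL2 H L) = iota ej hej φ hφ δ := by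
    refine lp.ext (funext fun x => ?_)
    rcases em (∃ p, e ej φ p = x) with ⟨p, rfl⟩ | hx
    · rw [iota_apply]
      by_cases hpi : p = (i, (1 : G))
      · rw [hpi, he1, hδ, lp.single_apply_self, lp.single_apply_self]
      · rw [hδ, lp.single_apply_ne 2 _ _ hpi, lp.single_apply_ne 2 _ _ (fun hc => hpi
          (e_inj hej hφ (hc.trans he1.symm)))]
    · rw [iota_apply' ej hej φ hφ _ hx,
        lp.single_apply_ne 2 _ _ (fun hc => hx ⟨(i, (1 : G)), he1.trans hc.symm⟩)]
  have hPP' : ∀ x, P' (P' x) = P' x := fun x => by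
    conv_rhs => rw [← hP']
    rfl
  -- the projection of the embedded basis vector
  have hPδ : P (lp.single 2 (ej i, (1 : H)) 1) = iota ej hej φ hφ (P' δ) := by
    rw [hsingle]
    apply proj_eq P T hP hsa hr
    · apply iota_ker
      have hm : P' δ ∈ LinearMap.ker (T' : GroupL2 G l →ₗ[ℂ] GroupL2 G l) := hr' ▸ ⟨δ, rfl⟩
      simpa using hm
    · intro w hw
      rw [inner_sub_left, inner_iota_left, inner_iota_left, ← inner_sub_left]
      have hm : rho ej hej φ hφ w ∈ LinearMap.range (P' : GroupL2 G l →ₗ[ℂ] GroupL2 G l) := by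
        rw [hr']
        simpa using rho_ker w hw
      obtain ⟨z, hz⟩ := hm
      have hz' : P' z = rho ej hej φ hφ w := hz
      rw [← hz', ← ContinuousLinearMap.adjoint_inner_left, hsa'.adjoint_eq, map_sub, hPP',
        sub_self, inner_zero_left]
  rw [hPδ, lp.inner_single_right, lp.inner_single_right]
  congr 1
  rw [← he1, iota_apply]

end Stmt6Aux

open Stmt6Aux in
/-- For `a₁ ∈ M_{l₁}(ℤ[Γ₁])`, `a₂ ∈ M_{l₂}(ℤ[Γ₂])` and the block sum
`a = a₁ ⊕ a₂ ∈ M_{l₁+l₂}(ℤ[Γ₁ × Γ₂])`, the von Neumann dimension of `ker a` on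
`ℓ²(Γ₁×Γ₂)^{l₁+l₂}` (the `Γ`-trace of the orthogonal projection `P` onto the kernel of the
right-convolution operator `T` of `a`) equals `dim_{Γ₁}(ker a₁) + dim_{Γ₂}(ker a₂)`. -/
theorem stmt_6 {Γ₁ Γ₂ : Type*} [Group Γ₁] [Group Γ₂]
    [DecidableEq Γ₁] [DecidableEq Γ₂] (l₁ l₂ : ℕ)
    (a₁ : Matrix (Fin l₁) (Fin l₁) (MonoidAlgebra ℤ Γ₁))
    (a₂ : Matrix (Fin l₂) (Fin l₂) (MonoidAlgebra ℤ Γ₂))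
    (a : Matrix (Fin (l₁ + l₂)) (Fin (l₁ + l₂)) (MonoidAlgebra ℤ (Γ₁ × Γ₂)))
    (ha : a = Matrix.reindex finSumFinEquiv finSumFinEquiv
      (Matrix.fromBlocks
        (a₁.map (MonoidAlgebra.mapDomain fun g => (g, (1 : Γ₂))))
        0 0
        (a₂.map (MonoidAlgebra.mapDomain fun g => ((1 : Γ₁), g)))))
    -- the right-convolution operators associated to `a₁`, `a₂`, `a`:
    (T₁ : GroupL2 Γ₁ l₁ →L[ℂ] GroupL2 Γ₁ l₁)
    (hT₁ : ∀ (f : GroupL2 Γ₁ l₁) (i : Fin l₁) (g : Γ₁),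
      T₁ f (i, g) = ∑ j : Fin l₁, ∑ x ∈ (a₁ i j).coeff.support,
        (((a₁ i j).coeff x : ℤ) : ℂ) * f (j, g * x⁻¹))
    (T₂ : GroupL2 Γ₂ l₂ →L[ℂ] GroupL2 Γ₂ l₂)
    (hT₂ : ∀ (f : GroupL2 Γ₂ l₂) (i : Fin l₂) (g : Γ₂),
      T₂ f (i, g) = ∑ j : Fin l₂, ∑ x ∈ (a₂ i j).coeff.support,
        (((a₂ i j).coeff x : ℤ) : ℂ) * f (j, g * x⁻¹))
    (T : GroupL2 (Γ₁ × Γ₂) (l₁ + l₂) →L[ℂ] GroupL2 (Γ₁ × Γ₂) (l₁ + l₂))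
    (hT : ∀ (f : GroupL2 (Γ₁ × Γ₂) (l₁ + l₂)) (i : Fin (l₁ + l₂)) (g : Γ₁ × Γ₂),
      T f (i, g) = ∑ j : Fin (l₁ + l₂), ∑ x ∈ (a i j).coeff.support,
        (((a i j).coeff x : ℤ) : ℂ) * f (j, g * x⁻¹))
    -- the orthogonal projections onto the kernels:
    (P₁ : GroupL2 Γ₁ l₁ →L[ℂ] GroupL2 Γ₁ l₁)
    (hP₁ : IsIdempotentElem P₁) (hP₁sa : IsSelfAdjoint P₁)
    (hP₁r : LinearMap.range (P₁ : GroupL2 Γ₁ l₁ →ₗ[ℂ] GroupL2 Γ₁ l₁) = LinearMap.ker (T₁ : GroupL2 Γ₁ l₁ →ₗ[ℂ] GroupL2 Γ₁ l₁))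
    (P₂ : GroupL2 Γ₂ l₂ →L[ℂ] GroupL2 Γ₂ l₂)
    (hP₂ : IsIdempotentElem P₂) (hP₂sa : IsSelfAdjoint P₂)
    (hP₂r : LinearMap.range (P₂ : GroupL2 Γ₂ l₂ →ₗ[ℂ] GroupL2 Γ₂ l₂) = LinearMap.ker (T₂ : GroupL2 Γ₂ l₂ →ₗ[ℂ] GroupL2 Γ₂ l₂))
    (P : GroupL2 (Γ₁ × Γ₂) (l₁ + l₂) →L[ℂ] GroupL2 (Γ₁ × Γ₂) (l₁ + l₂))
    (hP : IsIdempotentElem P) (hPsa : IsSelfAdjoint P)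
    (hPr : LinearMap.range (P : GroupL2 (Γ₁ × Γ₂) (l₁ + l₂) →ₗ[ℂ] GroupL2 (Γ₁ × Γ₂) (l₁ + l₂)) = LinearMap.ker (T : GroupL2 (Γ₁ × Γ₂) (l₁ + l₂) →ₗ[ℂ] GroupL2 (Γ₁ × Γ₂) (l₁ + l₂))) :
    -- the von Neumann dimension of `ker a` is the sum of those of `ker a₁` and `ker a₂`:
    ∑ i : Fin (l₁ + l₂),
      (⟪P (lp.single 2 (i, (1 : Γ₁ × Γ₂)) 1), lp.single 2 (i, (1 : Γ₁ × Γ₂)) 1⟫_ℂ).re =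
    (∑ i : Fin l₁,
      (⟪P₁ (lp.single 2 (i, (1 : Γ₁)) 1), lp.single 2 (i, (1 : Γ₁)) 1⟫_ℂ).re) +
    (∑ i : Fin l₂,
      (⟪P₂ (lp.single 2 (i, (1 : Γ₂)) 1), lp.single 2 (i, (1 : Γ₂)) 1⟫_ℂ).re) := by
  subst ha
  have hej₁ : Function.Injective (Fin.castAdd l₂ : Fin l₁ → Fin (l₁ + l₂)) :=
    Fin.castAdd_injective l₁ l₂
  have hej₂ : Function.Injective (Fin.natAdd l₁ : Fin l₂ → Fin (l₁ + l₂)) :=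
    fun i j h => Fin.ext (Nat.add_left_cancel (congrArg Fin.val h))
  have hφ₁ : Function.Injective ⇑(MonoidHom.inl Γ₁ Γ₂) :=
    fun g g' h => by simpa using congrArg Prod.fst h
  have hφ₂ : Function.Injective ⇑(MonoidHom.inr Γ₁ Γ₂) :=
    fun g g' h => by simpa using congrArg Prod.snd h
  have hcoe₁ : ⇑(MonoidHom.inl Γ₁ Γ₂) = fun g => (g, (1 : Γ₂)) := rfl
  have hcoe₂ : ⇑(MonoidHom.inr Γ₁ Γ₂) = fun g => ((1 : Γ₁), g) := rfl
  have H1₁ : ∀ i j, (Matrix.reindex finSumFinEquiv finSumFinEquiv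
      (Matrix.fromBlocks (a₁.map (MonoidAlgebra.mapDomain fun g => (g, (1 : Γ₂)))) 0 0
        (a₂.map (MonoidAlgebra.mapDomain fun g => ((1 : Γ₁), g)))))
      (Fin.castAdd l₂ i) (Fin.castAdd l₂ j)
      = MonoidAlgebra.mapDomain ⇑(MonoidHom.inl Γ₁ Γ₂) (a₁ i j) := by
    intro i j
    rw [hcoe₁]
    simp [Matrix.reindex_apply, Matrix.submatrix_apply, finSumFinEquiv_symm_apply_castAdd]
  have H2₁ : ∀ (i : Fin l₁) (k : Fin (l₁ + l₂)), (∀ j, Fin.castAdd l₂ j ≠ k) →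
      (Matrix.reindex finSumFinEquiv finSumFinEquiv
      (Matrix.fromBlocks (a₁.map (MonoidAlgebra.mapDomain fun g => (g, (1 : Γ₂)))) 0 0
        (a₂.map (MonoidAlgebra.mapDomain fun g => ((1 : Γ₁), g)))))
      (Fin.castAdd l₂ i) k = 0 := by
    intro i k hk
    obtain ⟨s, rfl⟩ := finSumFinEquiv.surjective k
    cases s with
    | inl j => exact absurd (finSumFinEquiv_apply_left j).symm (hk j)
    | inr j =>
      simp [Matrix.reindex_apply, Matrix.submatrix_apply, finSumFinEquiv_symm_apply_castAdd]
  have H3₁ : ∀ (i : Fin l₁) (k : Fin (l₁ + l₂)), (∀ j, Fin.castAdd l₂ j ≠ k) →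
      (Matrix.reindex finSumFinEquiv finSumFinEquiv
      (Matrix.fromBlocks (a₁.map (MonoidAlgebra.mapDomain fun g => (g, (1 : Γ₂)))) 0 0
        (a₂.map (MonoidAlgebra.mapDomain fun g => ((1 : Γ₁), g)))))
      k (Fin.castAdd l₂ i) = 0 := by
    intro i k hk
    obtain ⟨s, rfl⟩ := finSumFinEquiv.surjective k
    cases s with
    | inl j => exact absurd (finSumFinEquiv_apply_left j).symm (hk j)
    | inr j =>
      simp [Matrix.reindex_apply, Matrix.submatrix_apply, finSumFinEquiv_symm_apply_castAdd]
  have H1₂ : ∀ i j, (Matrix.reindex finSumFinEquiv finSumFinEquiv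
      (Matrix.fromBlocks (a₁.map (MonoidAlgebra.mapDomain fun g => (g, (1 : Γ₂)))) 0 0
        (a₂.map (MonoidAlgebra.mapDomain fun g => ((1 : Γ₁), g)))))
      (Fin.natAdd l₁ i) (Fin.natAdd l₁ j)
      = MonoidAlgebra.mapDomain ⇑(MonoidHom.inr Γ₁ Γ₂) (a₂ i j) := by
    intro i j
    rw [hcoe₂]
    simp [Matrix.reindex_apply, Matrix.submatrix_apply, finSumFinEquiv_symm_apply_natAdd]
  have H2₂ : ∀ (i : Fin l₂) (k : Fin (l₁ + l₂)), (∀ j, Fin.natAdd l₁ j ≠ k) →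
      (Matrix.reindex finSumFinEquiv finSumFinEquiv
      (Matrix.fromBlocks (a₁.map (MonoidAlgebra.mapDomain fun g => (g, (1 : Γ₂)))) 0 0
        (a₂.map (MonoidAlgebra.mapDomain fun g => ((1 : Γ₁), g)))))
      (Fin.natAdd l₁ i) k = 0 := by
    intro i k hk
    obtain ⟨s, rfl⟩ := finSumFinEquiv.surjective k
    cases s with
    | inr j => exact absurd (finSumFinEquiv_apply_right j).symm (hk j)
    | inl j =>
      simp [Matrix.reindex_apply, Matrix.submatrix_apply, finSumFinEquiv_symm_apply_natAdd]
  have H3₂ : ∀ (i : Fin l₂) (k : Fin (l₁ + l₂)), (∀ j, Fin.natAdd l₁ j ≠ k) →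
      (Matrix.reindex finSumFinEquiv finSumFinEquiv
      (Matrix.fromBlocks (a₁.map (MonoidAlgebra.mapDomain fun g => (g, (1 : Γ₂)))) 0 0
        (a₂.map (MonoidAlgebra.mapDomain fun g => ((1 : Γ₁), g)))))
      k (Fin.natAdd l₁ i) = 0 := by
    intro i k hk
    obtain ⟨s, rfl⟩ := finSumFinEquiv.surjective k
    cases s with
    | inr j => exact absurd (finSumFinEquiv_apply_right j).symm (hk j)
    | inl j =>
      simp [Matrix.reindex_apply, Matrix.submatrix_apply, finSumFinEquiv_symm_apply_natAdd]
  rw [Fin.sum_univ_add]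
  congr 1
  · refine Finset.sum_congr rfl fun i _ => ?_
    exact congrArg Complex.re
      (key (Fin.castAdd l₂) hej₁ (MonoidHom.inl Γ₁ Γ₂) hφ₁ a₁ _ H1₁ H2₁ H3₁
        T₁ hT₁ T hT P₁ hP₁ hP₁sa hP₁r P hP hPsa hPr i)
  · refine Finset.sum_congr rfl fun i _ => ?_
    exact congrArg Complex.re
      (key (Fin.natAdd l₁) hej₂ (MonoidHom.inr Γ₁ Γ₂) hφ₂ a₂ _ H1₂ H2₂ H3₂
        T₂ hT₂ T hT P₂ hP₂ hP₂sa hP₂r P hP hPsa hPr i)
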